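/- arXiv:1302.5654 — 4 statements merged into one kernel-verified Lean document; each statement's English description precedes it below -/
import Mathlib

section
/- Let V be a finite-dimensional vector space over a field F, and let E₁, …, Eₙ be subsets of V each contained in a one-dimensional subspace of V. Let S = {1, …, n} and let 𝓘 be the collection of subsets I = {i₁, …, iⱼ} of S such that {E_{i₁} ∪ (−E_{i₁}), …, E_{iⱼ} ∪ (−E_{iⱼ})} forms a LISF. Then (S, 𝓘) is a matroid. -/
/-- A family of nonempty subsets of a vector space is a *linearly independent set
family* (LISF) if every selection of one vector from each set is linearly
independent. -/
def IsLISF (F : Type*) {V ι : Type*} [Field F] [AddCommGroup V] [Module F V]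
    (C : ι → Set V) : Prop :=
  (∀ i, (C i).Nonempty) ∧ ∀ v : ι → V, (∀ i, v i ∈ C i) → LinearIndependent F v

theorem lisf_union_neg_matroid (F V : Type*) [Field F] [AddCommGroup V] [Module F V]
    [FiniteDimensional F V] (n : ℕ) (E : Fin n → Set V)
    (hE : ∀ i, ∃ W : Submodule F V, Module.finrank F W = 1 ∧ E i ⊆ W)
    (𝓘 : Finset (Fin n) → Prop)
    (h𝓘 : ∀ I : Finset (Fin n), 𝓘 I ↔ IsLISF F (fun i : I => E i.val ∪ (-E i.val))) :
    𝓘 ∅ ∧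
    (∀ I J : Finset (Fin n), 𝓘 I → J ⊆ I → 𝓘 J) ∧
    (∀ I₁ I₂ : Finset (Fin n), 𝓘 I₁ → 𝓘 I₂ → I₁.card < I₂.card →
      ∃ e ∈ I₂ \ I₁, 𝓘 (insert e I₁)) := by
  classical
  -- choose a canonical element of each `E i` when possible
  have hw0 : ∀ i, ∃ x : V, ((E i).Nonempty → x ∈ E i) := by
    intro i
    by_cases h : (E i).Nonempty
    · exact ⟨h.choose, fun _ => h.choose_spec⟩
    · exact ⟨0, fun h' => absurd h' h⟩
  choose w hwmem using hw0
  -- "goodness" extracted from 𝓘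
  have hgood : ∀ I : Finset (Fin n), 𝓘 I → ∀ i ∈ I, (E i).Nonempty ∧ 0 ∉ E i := by
    intro I hI i hi
    rw [h𝓘] at hI
    obtain ⟨hne, hli⟩ := hI
    obtain ⟨x, hx⟩ := hne ⟨i, hi⟩
    have hEne : (E i).Nonempty := by
      rcases hx with hx | hx
      · exact ⟨x, hx⟩
      · exact ⟨-x, hx⟩
    refine ⟨hEne, fun h0 => ?_⟩
    -- build a selection which is 0 at index i
    set v : I → V := fun j => if j.1 = i then 0 else w j.1 with hv
    have hvmem : ∀ j : I, v j ∈ E j.1 ∪ (-E j.1) := by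
      intro j
      by_cases hji : j.1 = i
      · simp only [hv, hji, if_pos]
        exact Or.inl (hji ▸ h0)
      · simp only [hv, hji, if_neg, ite_false]
        obtain ⟨y, hy⟩ := hne j
        have : (E j.1).Nonempty := by
          rcases hy with hy | hy
          · exact ⟨y, hy⟩
          · exact ⟨-y, hy⟩
        exact Or.inl (hwmem j.1 this)
    have := (hli v hvmem).ne_zero ⟨i, hi⟩
    exact this (by simp [hv])
  -- forward: 𝓘 I implies the canonical selection is linearly independent
  have hfwd : ∀ I : Finset (Fin n), 𝓘 I → LinearIndependent F (fun i : I => w i.1) := by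
    intro I hI
    have hg := hgood I hI
    rw [h𝓘] at hI
    exact hI.2 _ (fun i => Or.inl (hwmem i.1 (hg i.1 i.2).1))
  -- every element of `E i ∪ -E i` is a nonzero multiple of `w i`, when `I` is good
  have hscal : ∀ i : Fin n, (E i).Nonempty → 0 ∉ E i → ∀ x ∈ E i ∪ (-E i),
      ∃ c : F, c ≠ 0 ∧ x = c • w i := by
    intro i hne h0 x hx
    obtain ⟨W, hW1, hWsub⟩ := hE i
    have hwW : w i ∈ W := hWsub (hwmem i hne)
    have hwne : w i ≠ 0 := fun h => h0 (h ▸ hwmem i hne)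
    have hspan : Submodule.span F {w i} = W := by
      apply Submodule.eq_of_le_of_finrank_le
      · rwa [Submodule.span_singleton_le_iff_mem]
      · rw [hW1, finrank_span_singleton hwne]
    have hxW : x ∈ W ∧ x ≠ 0 := by
      rcases hx with hx | hx
      · exact ⟨hWsub hx, fun h => h0 (h ▸ hx)⟩
      · rw [Set.mem_neg] at hx
        refine ⟨?_, fun h => h0 (by simpa [h] using hx)⟩
        have := hWsub hx
        simpa using W.neg_mem this
    obtain ⟨c, hc⟩ := Submodule.mem_span_singleton.mp (hspan ▸ hxW.1)
    refine ⟨c, fun h => ?_, hc.symm⟩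
    exact hxW.2 (by rw [← hc, h, zero_smul])
  -- backward: goodness + linear independence of the canonical selection gives 𝓘 I
  have hbwd : ∀ I : Finset (Fin n), (∀ i ∈ I, (E i).Nonempty ∧ 0 ∉ E i) →
      LinearIndependent F (fun i : I => w i.1) → 𝓘 I := by
    intro I hg hli
    rw [h𝓘]
    refine ⟨fun i => ⟨w i.1, Or.inl (hwmem i.1 (hg i.1 i.2).1)⟩, ?_⟩
    intro v hv
    have : ∀ i : I, ∃ c : F, c ≠ 0 ∧ v i = c • w i.1 := fun i =>
      hscal i.1 (hg i.1 i.2).1 (hg i.1 i.2).2 (v i) (hv i)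
    choose c hc0 hc using this
    have := hli.units_smul (fun i => Units.mk0 (c i) (hc0 i))
    convert this using 1
    funext i
    simp [hc i, Units.smul_def]
  refine ⟨?_, ?_, ?_⟩
  · -- empty set
    rw [h𝓘]
    haveI : IsEmpty ((∅ : Finset (Fin n)) : Type _) :=
      ⟨fun i => absurd i.2 (Finset.notMem_empty _)⟩
    exact ⟨fun i => absurd i.2 (Finset.notMem_empty _), fun v _ => linearIndependent_empty_type⟩
  · -- downward closure
    intro I J hI hJI
    refine hbwd J (fun i hi => hgood I hI i (hJI hi)) ?_
    have hli := hfwd I hI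
    exact hli.comp (fun j : J => (⟨j.1, hJI j.2⟩ : I))
      (fun a b hab => Subtype.ext (by simpa using congrArg Subtype.val hab))
  · -- exchange
    intro I₁ I₂ hI₁ hI₂ hcard
    by_contra hno
    push_neg at hno
    have hli₁ := hfwd I₁ hI₁
    have hli₂ := hfwd I₂ hI₂
    -- every `w e`, `e ∈ I₂`, lies in the span of `w '' I₁`
    have hmem : ∀ e ∈ I₂, w e ∈ Submodule.span F (w '' ↑I₁) := by
      intro e he
      by_cases he1 : e ∈ I₁
      · exact Submodule.subset_span ⟨e, he1, rfl⟩
      by_contra hnot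
      refine hno e (Finset.mem_sdiff.mpr ⟨he, he1⟩) ?_
      refine hbwd _ (fun i hi => ?_) ?_
      · rcases Finset.mem_insert.mp hi with h | h
        · exact h ▸ hgood I₂ hI₂ e he
        · exact hgood I₁ hI₁ i h
      · have : LinearIndependent F fun x : ↥(insert e (↑I₁ : Set (Fin n))) => w x :=
          (linearIndepOn_insert (f := w) (by simpa using he1)).mpr ⟨hli₁, hnot⟩
        have hset : ((insert e I₁ : Finset (Fin n)) : Set (Fin n)) = insert e ↑I₁ :=
          Finset.coe_insert e I₁
        exact (linearIndependent_equiv (Equiv.setCongr hset)).mpr this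
    -- so the span of `w '' I₂` is contained in that of `w '' I₁`
    have hle : Submodule.span F (w '' ↑I₂) ≤ Submodule.span F (w '' ↑I₁) := by
      rw [Submodule.span_le]
      rintro x ⟨e, he, rfl⟩
      exact hmem e he
    have h1 : Module.finrank F (Submodule.span F (w '' ↑I₁)) = I₁.card := by
      have := finrank_span_eq_card hli₁
      rwa [show Set.range (fun i : {x // x ∈ I₁} => w ↑i) = w '' ↑I₁ by ext x; simp,
        Fintype.card_coe] at this
    have h2 : Module.finrank F (Submodule.span F (w '' ↑I₂)) = I₂.card := by
      have := finrank_span_eq_card hli₂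
      rwa [show Set.range (fun i : {x // x ∈ I₂} => w ↑i) = w '' ↑I₂ by ext x; simp,
        Fintype.card_coe] at this
    have := Submodule.finrank_mono hle
    rw [h1, h2] at this
    omega
end

section
/- In ℝ², define E₁ = {(x,y) : (x−1)² + (y−1)² ≤ 1}, E₂ = {(x,y) : (x−1)² + y² ≤ 1} \ {(0,0)}, and E₃ = {(x,y) : (x−1)² + (y+1)² ≤ 1/9}. Let S = {1,2,3} and let 𝓘 be the collection of subsets I of S such that the family {Eᵢ : i ∈ I} is a LISF. Then (S, 𝓘) fails the matroid exchange axiom: {1,3} ∈ 𝓘 and {2} ∈ 𝓘, but neither {1,2} nor {2,3} is in 𝓘. -/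
lemma disks_key (a b : ℝ × ℝ) (ha : (a.1 - 1) ^ 2 + (a.2 - 1) ^ 2 ≤ 1)
    (hb : (b.1 - 1) ^ 2 + (b.2 + 1) ^ 2 ≤ 1 / 9) :
    b ≠ 0 ∧ ∀ t : ℝ, a ≠ t • b := by
  have hb1 : 0 < b.1 := by nlinarith [sq_nonneg (b.2 + 1)]
  have hb2 : b.2 < 0 := by nlinarith [sq_nonneg (b.1 - 1)]
  have ha1 : 0 ≤ a.1 := by nlinarith [sq_nonneg (a.2 - 1)]
  have ha2 : 0 ≤ a.2 := by nlinarith [sq_nonneg (a.1 - 1)]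
  constructor
  · intro h
    rw [h] at hb
    simp at hb
    nlinarith
  · intro t h
    have h1 : a.1 = t * b.1 := by rw [h]; rfl
    have h2 : a.2 = t * b.2 := by rw [h]; rfl
    have ht1 : 0 ≤ t := by
      by_contra hc
      push_neg at hc
      nlinarith
    have ht2 : t ≤ 0 := by
      by_contra hc
      push_neg at hc
      nlinarith
    have : t = 0 := le_antisymm ht2 ht1
    subst this
    simp at h1 h2
    nlinarith

theorem disks_not_matroid
    (E : Fin 3 → Set (ℝ × ℝ))
    (hE1 : E 0 = {p : ℝ × ℝ | (p.1 - 1) ^ 2 + (p.2 - 1) ^ 2 ≤ 1})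
    (hE2 : E 1 = {p : ℝ × ℝ | (p.1 - 1) ^ 2 + p.2 ^ 2 ≤ 1} \ {(0, 0)})
    (hE3 : E 2 = {p : ℝ × ℝ | (p.1 - 1) ^ 2 + (p.2 + 1) ^ 2 ≤ 1 / 9})
    (𝓘 : Finset (Fin 3) → Prop)
    (h𝓘 : ∀ I : Finset (Fin 3), 𝓘 I ↔ IsLISF ℝ (fun i : I => E i.val)) :
    𝓘 {0, 2} ∧ 𝓘 {1} ∧ ¬ 𝓘 {0, 1} ∧ ¬ 𝓘 {1, 2} ∧
    ¬ (∀ I₁ I₂ : Finset (Fin 3), 𝓘 I₁ → 𝓘 I₂ → I₁.card < I₂.card →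
        ∃ e ∈ I₂ \ I₁, 𝓘 (insert e I₁)) := by
  have h02 : 𝓘 {0, 2} := by
    rw [h𝓘]
    constructor
    · rintro ⟨i, hi⟩
      simp only [Finset.mem_insert, Finset.mem_singleton] at hi
      rcases hi with h | h <;> subst h
      · exact ⟨(1, 1), by show (1, 1) ∈ E 0; rw [hE1]; norm_num⟩
      · exact ⟨(1, -1), by show (1, -1) ∈ E 2; rw [hE3]; norm_num⟩
    · intro v hv
      set e : Fin 2 ≃ ({0, 2} : Finset (Fin 3)) :=
        ⟨![⟨0, by decide⟩, ⟨2, by decide⟩],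
         fun i => if i.val = 0 then 0 else 1, by decide, by decide⟩ with he
      rw [← linearIndependent_equiv e]
      rw [linearIndependent_fin2]
      have h0 : v ⟨0, by decide⟩ ∈ E 0 := hv ⟨0, by decide⟩
      have h2 : v ⟨2, by decide⟩ ∈ E 2 := hv ⟨2, by decide⟩
      rw [hE1] at h0
      rw [hE3] at h2
      have key := disks_key _ _ h0 h2
      refine ⟨?_, fun t ht => key.2 t ht.symm⟩
      exact key.1
  have h1 : 𝓘 {1} := by
    rw [h𝓘]
    constructor
    · rintro ⟨i, hi⟩
      simp only [Finset.mem_singleton] at hi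
      subst hi
      exact ⟨(1, 0), by show (1, 0) ∈ E 1; rw [hE2]; exact ⟨by norm_num, by simp⟩⟩
    · intro v hv
      letI : Unique ({1} : Finset (Fin 3)) :=
        ⟨⟨⟨1, by decide⟩⟩, by rintro ⟨a, ha⟩; simp only [Finset.mem_singleton] at ha; subst ha; rfl⟩
      apply linearIndependent_unique_iff.mpr
      have h : v default ∈ E (default : ({1} : Finset (Fin 3))).val := hv default
      have hval : ((default : ({1} : Finset (Fin 3)))).val = 1 := rfl
      rw [hval, hE2] at h
      intro hzero
      exact h.2 (by rw [hzero]; rfl)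
  have h01 : ¬ 𝓘 {0, 1} := by
    rw [h𝓘]
    rintro ⟨-, hli⟩
    have hli' := hli (fun _ => ((1 : ℝ), (1 : ℝ))) ?_
    · have := hli'.injective (a₁ := ⟨0, by decide⟩) (a₂ := ⟨1, by decide⟩) rfl
      simp at this
    · rintro ⟨i, hi⟩
      simp only [Finset.mem_insert, Finset.mem_singleton] at hi
      rcases hi with h | h <;> subst h
      · show ((1 : ℝ), (1 : ℝ)) ∈ E 0; rw [hE1]; norm_num
      · show ((1 : ℝ), (1 : ℝ)) ∈ E 1; rw [hE2]; exact ⟨by norm_num, by simp⟩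
  have h12 : ¬ 𝓘 {1, 2} := by
    rw [h𝓘]
    rintro ⟨-, hli⟩
    have hli' := hli (fun _ => ((1 : ℝ), (-1 : ℝ))) ?_
    · have := hli'.injective (a₁ := ⟨1, by decide⟩) (a₂ := ⟨2, by decide⟩) rfl
      simp at this
    · rintro ⟨i, hi⟩
      simp only [Finset.mem_insert, Finset.mem_singleton] at hi
      rcases hi with h | h <;> subst h
      · show ((1 : ℝ), (-1 : ℝ)) ∈ E 1; rw [hE2]; exact ⟨by norm_num, by simp⟩
      · show ((1 : ℝ), (-1 : ℝ)) ∈ E 2; rw [hE3]; norm_num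
  refine ⟨h02, h1, h01, h12, ?_⟩
  intro hex
  obtain ⟨e, he, hIns⟩ := hex {1} {0, 2} h1 h02 (by decide)
  have he' : e = 0 ∨ e = 2 := by
    simp only [Finset.mem_sdiff, Finset.mem_insert, Finset.mem_singleton] at he
    tauto
  rcases he' with rfl | rfl
  · have hq : insert (0 : Fin 3) {1} = ({0, 1} : Finset (Fin 3)) := by decide
    rw [hq] at hIns
    exact h01 hIns
  · have hq : insert (2 : Fin 3) {1} = ({1, 2} : Finset (Fin 3)) := by decide
    rw [hq] at hIns
    exact h12 hIns
end

section
/- In ℝ³, define E₁ = span{(1,0,0),(0,1,0)} \ {(0,y,0) : y ∈ ℝ}, E₂ = span{(0,0,1),(1,1,0)} \ {(0,0,0)}, and E₃ = span{(0,1,0),(0,0,1)} \ {(0,y,0) : y ∈ ℝ}. Let S = {1,2,3} and let 𝓘 be the collection of subsets I of S such that {Eᵢ : i ∈ I} is a LISF. Then {1,3} ∈ 𝓘 and {2} ∈ 𝓘, but neither {1,2} ∈ 𝓘 nor {2,3} ∈ 𝓘; hence (S, 𝓘) is not a matroid. -/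
lemma span01 (x : Fin 3 → ℝ) :
    x ∈ Submodule.span ℝ {(![1,0,0] : Fin 3 → ℝ), ![0,1,0]} ↔ x 2 = 0 := by
  rw [Submodule.mem_span_pair]
  constructor
  · rintro ⟨m, n, rfl⟩; simp
  · intro h; exact ⟨x 0, x 1, by funext i; fin_cases i <;> simp [h]⟩

lemma span23 (x : Fin 3 → ℝ) :
    x ∈ Submodule.span ℝ {(![0,0,1] : Fin 3 → ℝ), ![1,1,0]} ↔ x 0 = x 1 := by
  rw [Submodule.mem_span_pair]
  constructor
  · rintro ⟨m, n, rfl⟩; simp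
  · intro h; exact ⟨x 2, x 0, by funext i; fin_cases i <;> simp [h]⟩

lemma span12 (x : Fin 3 → ℝ) :
    x ∈ Submodule.span ℝ {(![0,1,0] : Fin 3 → ℝ), ![0,0,1]} ↔ x 0 = 0 := by
  rw [Submodule.mem_span_pair]
  constructor
  · rintro ⟨m, n, rfl⟩; simp
  · intro h; exact ⟨x 1, x 2, by funext i; fin_cases i <;> simp [h]⟩

lemma yaxis (x : Fin 3 → ℝ) :
    (∃ y : ℝ, x = ![0, y, 0]) ↔ x 0 = 0 ∧ x 2 = 0 := by
  constructor
  · rintro ⟨y, rfl⟩; simp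
  · rintro ⟨h0, h2⟩; exact ⟨x 1, by funext i; fin_cases i <;> simp [h0, h2]⟩

theorem planes_not_matroid
    (E : Fin 3 → Set (Fin 3 → ℝ))
    (hE1 : E 0 = (Submodule.span ℝ {(![1, 0, 0] : Fin 3 → ℝ), ![0, 1, 0]} : Set (Fin 3 → ℝ))
      \ {x | ∃ y : ℝ, x = ![0, y, 0]})
    (hE2 : E 1 = (Submodule.span ℝ {(![0, 0, 1] : Fin 3 → ℝ), ![1, 1, 0]} : Set (Fin 3 → ℝ))
      \ {0})
    (hE3 : E 2 = (Submodule.span ℝ {(![0, 1, 0] : Fin 3 → ℝ), ![0, 0, 1]} : Set (Fin 3 → ℝ))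
      \ {x | ∃ y : ℝ, x = ![0, y, 0]})
    (𝓘 : Finset (Fin 3) → Prop)
    (h𝓘 : ∀ I : Finset (Fin 3), 𝓘 I ↔ IsLISF ℝ (fun i : I => E i.val)) :
    𝓘 {0, 2} ∧ 𝓘 {1} ∧ ¬ 𝓘 {0, 1} ∧ ¬ 𝓘 {1, 2} ∧
    ¬ (∀ I₁ I₂ : Finset (Fin 3), 𝓘 I₁ → 𝓘 I₂ → I₁.card < I₂.card →
        ∃ e ∈ I₂ \ I₁, 𝓘 (insert e I₁)) := by
  -- membership characterizations
  have hm0 : ∀ x : Fin 3 → ℝ, x ∈ E 0 ↔ x 2 = 0 ∧ x 0 ≠ 0 := by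
    intro x
    rw [hE1]
    simp only [Set.mem_diff, SetLike.mem_coe, span01, Set.mem_setOf_eq, yaxis]
    tauto
  have hm1 : ∀ x : Fin 3 → ℝ, x ∈ E 1 ↔ x 0 = x 1 ∧ x ≠ 0 := by
    intro x
    rw [hE2]
    simp only [Set.mem_diff, SetLike.mem_coe, span23, Set.mem_singleton_iff]
  have hm2 : ∀ x : Fin 3 → ℝ, x ∈ E 2 ↔ x 0 = 0 ∧ x 2 ≠ 0 := by
    intro x
    rw [hE3]
    simp only [Set.mem_diff, SetLike.mem_coe, span12, Set.mem_setOf_eq, yaxis]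
    tauto
  have h100 : (![1,0,0] : Fin 3 → ℝ) ∈ E 0 := by
    rw [hm0]; constructor <;> simp
  have h001 : (![0,0,1] : Fin 3 → ℝ) ∈ E 1 := by
    rw [hm1]
    refine ⟨by simp, fun h => ?_⟩
    have := congrFun h 2; simp at this
  have h001' : (![0,0,1] : Fin 3 → ℝ) ∈ E 2 := by
    rw [hm2]; constructor <;> simp
  have h110 : (![1,1,0] : Fin 3 → ℝ) ∈ E 0 := by
    rw [hm0]; constructor <;> simp
  have h110' : (![1,1,0] : Fin 3 → ℝ) ∈ E 1 := by
    rw [hm1]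
    refine ⟨by simp, fun h => ?_⟩
    have := congrFun h 0; simp at this
  -- 𝓘 {0, 2}
  have H02 : 𝓘 {0, 2} := by
    rw [h𝓘]
    constructor
    · rintro ⟨i, hi⟩
      fin_cases hi
      · exact ⟨_, h100⟩
      · exact ⟨_, h001'⟩
    · intro v hv
      rw [Fintype.linearIndependent_iff]
      intro g hg
      let a : ({0, 2} : Finset (Fin 3)) := ⟨0, by decide⟩
      let b : ({0, 2} : Finset (Fin 3)) := ⟨2, by decide⟩
      have huniv : (Finset.univ : Finset (({0, 2} : Finset (Fin 3)))) = {a, b} := by decide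
      have hab : a ≠ b := by simp [a, b]
      rw [huniv, Finset.sum_pair hab] at hg
      have hva := (hm0 (v a)).mp (hv a)
      have hvb := (hm2 (v b)).mp (hv b)
      have e2 := congrFun hg 2
      simp only [Pi.add_apply, Pi.smul_apply, smul_eq_mul, Pi.zero_apply,
        hva.1, hvb.2, mul_zero, zero_add] at e2
      have hgb : g b = 0 := by
        rcases mul_eq_zero.mp e2 with h | h
        · exact h
        · exact absurd h hvb.2
      have e0 := congrFun hg 0
      simp only [Pi.add_apply, Pi.smul_apply, smul_eq_mul, Pi.zero_apply,
        hvb.1, hgb, mul_zero, zero_mul, add_zero] at e0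
      have hga : g a = 0 := by
        rcases mul_eq_zero.mp e0 with h | h
        · exact h
        · exact absurd h hva.2
      rintro ⟨i, hi⟩
      fin_cases hi
      · exact hga
      · exact hgb
  -- 𝓘 {1}
  have H1 : 𝓘 {1} := by
    rw [h𝓘]
    constructor
    · rintro ⟨i, hi⟩
      fin_cases hi
      exact ⟨_, h001⟩
    · intro v hv
      rw [Fintype.linearIndependent_iff]
      intro g hg
      let c : ({1} : Finset (Fin 3)) := ⟨1, by decide⟩
      have huniv : (Finset.univ : Finset (({1} : Finset (Fin 3)))) = {c} := by decide
      rw [huniv, Finset.sum_singleton] at hg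
      have hvc := (hm1 (v c)).mp (hv c)
      have hgc : g c = 0 := by
        rcases smul_eq_zero.mp hg with h | h
        · exact h
        · exact absurd h hvc.2
      rintro ⟨i, hi⟩
      fin_cases hi
      exact hgc
  -- ¬ 𝓘 {0, 1}
  have H01 : ¬ 𝓘 {0, 1} := by
    rw [h𝓘]
    rintro ⟨-, hind⟩
    have hli := hind (fun _ => ![1,1,0]) ?_
    · have ha : (0 : Fin 3) ∈ ({0, 1} : Finset (Fin 3)) := by decide
      have hb : (1 : Fin 3) ∈ ({0, 1} : Finset (Fin 3)) := by decide
      have := hli.injective (a₁ := ⟨0, ha⟩) (a₂ := ⟨1, hb⟩) rfl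
      simp at this
    · rintro ⟨i, hi⟩
      fin_cases hi
      · exact h110
      · exact h110'
  -- ¬ 𝓘 {1, 2}
  have H12 : ¬ 𝓘 {1, 2} := by
    rw [h𝓘]
    rintro ⟨-, hind⟩
    have hli := hind (fun _ => ![0,0,1]) ?_
    · have ha : (1 : Fin 3) ∈ ({1, 2} : Finset (Fin 3)) := by decide
      have hb : (2 : Fin 3) ∈ ({1, 2} : Finset (Fin 3)) := by decide
      have := hli.injective (a₁ := ⟨1, ha⟩) (a₂ := ⟨2, hb⟩) rfl
      simp at this
    · rintro ⟨i, hi⟩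
      fin_cases hi
      · exact h001
      · exact h001'
  refine ⟨H02, H1, H01, H12, ?_⟩
  intro h
  obtain ⟨e, he, hei⟩ := h {1} {0, 2} H1 H02 (by decide)
  fin_cases he
  · rw [show insert (0 : Fin 3) {1} = ({0, 1} : Finset (Fin 3)) by decide] at hei
    exact H01 hei
  · rw [show insert (2 : Fin 3) {1} = ({1, 2} : Finset (Fin 3)) by decide] at hei
    exact H12 hei
end

section
/- Let V = W₁ ⊕ ⋯ ⊕ Wₖ be a direct sum of n-dimensional subspaces over a field F of characteristic zero. Let E₁, …, Eₘ ⊆ V be such that each Eᵢ equals an n_{Eᵢ}-dimensional subspace of V with the zero vector removed, where ⌈n/2⌉ + 1 ≤ n_{Eᵢ} ≤ n, and each Eᵢ is contained in some summand W_{i*}. Let S = {1, …, m} and 𝓘 be the collection of subsets I = {i₁, …, i_r} of S such that {E_{i₁}, …, E_{i_r}} is a LISF. Then (S, 𝓘) is a matroid. -/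
theorem lisf_matroid_multidim (F V : Type*) [Field F] [CharZero F] [AddCommGroup V]
    [Module F V] (k n m : ℕ) (W : Fin k → Submodule F V)
    (hind : iSupIndep W) (hsum : ⨆ i, W i = ⊤)
    (hdim : ∀ i, Module.finrank F (W i) = n)
    (E : Fin m → Set V) (U : Fin m → Submodule F V)
    (hEU : ∀ i, E i = (U i : Set V) \ {0})
    (hUlow : ∀ i, ⌈(n : ℚ) / 2⌉ + 1 ≤ Module.finrank F (U i))
    (hUhigh : ∀ i, Module.finrank F (U i) ≤ n)
    (hEW : ∀ i, ∃ j, E i ⊆ W j)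
    (𝓘 : Finset (Fin m) → Prop)
    (h𝓘 : ∀ I : Finset (Fin m), 𝓘 I ↔ IsLISF F (fun i : I => E i.val)) :
    𝓘 ∅ ∧
    (∀ I J : Finset (Fin m), 𝓘 I → J ⊆ I → 𝓘 J) ∧
    (∀ I₁ I₂ : Finset (Fin m), 𝓘 I₁ → 𝓘 I₂ → I₁.card < I₂.card →
      ∃ e ∈ I₂ \ I₁, 𝓘 (insert e I₁)) := by
  classical
  choose j hj using hEW
  have hceil0 : (0 : ℤ) ≤ ⌈(n : ℚ) / 2⌉ := Int.ceil_nonneg (by positivity)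
  have hfr1 : ∀ i, 1 ≤ Module.finrank F (U i) := by
    intro i
    have h1 := hUlow i
    have : (1 : ℤ) ≤ (Module.finrank F (U i) : ℤ) := by linarith
    exact_mod_cast this
  have hUW : ∀ i, U i ≤ W (j i) := by
    intro i x hx
    by_cases hx0 : x = 0
    · simp [hx0]
    · exact hj i (by rw [hEU]; exact ⟨hx, hx0⟩)
  have hUne : ∀ i, U i ≠ ⊥ := by
    intro i h
    have := hfr1 i
    rw [h, finrank_bot] at this
    omega
  have hEne : ∀ i, (E i).Nonempty := by
    intro i
    obtain ⟨b, hb, hb0⟩ := Submodule.exists_mem_ne_zero_of_ne_bot (hUne i)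
    exact ⟨b, by rw [hEU]; exact ⟨hb, hb0⟩⟩
  choose pick hpick using hEne
  have hn1 : 0 < m → 1 ≤ n := fun hm => le_trans (hfr1 ⟨0, hm⟩) (hUhigh ⟨0, hm⟩)
  -- key equivalence : 𝓘 I ↔ j is injective on I
  have key : ∀ I : Finset (Fin m), 𝓘 I ↔ Set.InjOn j I := by
    intro I
    rw [h𝓘]
    constructor
    · rintro ⟨-, hli⟩ a ha b hb hab
      by_contra hne
      have ha' : a ∈ I := ha
      have hb' : b ∈ I := hb
      have hnpos : 1 ≤ n := hn1 a.pos
      haveI : FiniteDimensional F (W (j a)) :=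
        FiniteDimensional.of_finrank_pos (by rw [hdim]; omega)
      haveI : FiniteDimensional F (U a) := Submodule.finiteDimensional_of_le (hUW a)
      haveI : FiniteDimensional F (U b) :=
        Submodule.finiteDimensional_of_le (show U b ≤ W (j a) from hab ▸ hUW b)
      have hsuple : U a ⊔ U b ≤ W (j a) := sup_le (hUW a) (hab ▸ hUW b)
      have hsup : Module.finrank F ↥(U a ⊔ U b) ≤ n := by
        have := Submodule.finrank_mono hsuple
        rwa [hdim] at this
      have heq := Submodule.finrank_sup_add_finrank_inf_eq (U a) (U b)
      have hceil : (n : ℤ) ≤ 2 * ⌈(n : ℚ) / 2⌉ := by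
        have h1 := Int.le_ceil ((n : ℚ) / 2)
        have h2 : (n : ℚ) ≤ 2 * (⌈(n : ℚ) / 2⌉ : ℚ) := by linarith
        exact_mod_cast h2
      have hinf : U a ⊓ U b ≠ ⊥ := by
        intro h
        rw [h, finrank_bot, add_zero] at heq
        have l1 := hUlow a
        have l2 := hUlow b
        have e1 : (Module.finrank F ↥(U a ⊔ U b) : ℤ)
            = (Module.finrank F (U a) : ℤ) + (Module.finrank F (U b) : ℤ) := by
          exact_mod_cast heq
        have e2 : (Module.finrank F ↥(U a ⊔ U b) : ℤ) ≤ (n : ℤ) := by exact_mod_cast hsup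
        linarith
      obtain ⟨v0, hv0, hv00⟩ := Submodule.exists_mem_ne_zero_of_ne_bot hinf
      rw [Submodule.mem_inf] at hv0
      set sel : I → V := fun i => if i.1 = a ∨ i.1 = b then v0 else pick i.1 with hsel
      have hselmem : ∀ i : I, sel i ∈ E i.1 := by
        intro i
        rw [hsel]
        dsimp only
        split_ifs with h
        · rcases h with h | h <;> rw [h, hEU]
          · exact ⟨hv0.1, hv00⟩
          · exact ⟨hv0.2, hv00⟩
        · exact hpick i.1
      have hli' := hli sel hselmem
      have hinj := hli'.injective
      have hsa : sel ⟨a, ha'⟩ = v0 := by simp [hsel]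
      have hsb : sel ⟨b, hb'⟩ = v0 := by simp [hsel]
      have : (⟨a, ha'⟩ : I) = ⟨b, hb'⟩ := hinj (by rw [hsa, hsb])
      exact hne (by simpa using this)
    · intro hinj
      refine ⟨fun i => ⟨pick i.1, hpick i.1⟩, fun v hv => ?_⟩
      have hji : Function.Injective (fun i : I => j i.1) := by
        intro a b hab
        exact Subtype.ext (hinj (Finset.mem_coe.mpr a.2) (Finset.mem_coe.mpr b.2) hab)
      refine iSupIndep.linearIndependent (fun i : I => W (j i.1)) (hind.comp hji)
        (fun i => ?_) (fun i => ?_)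
      · have h' : v i ∈ E i.1 := hv i
        rw [hEU] at h'
        exact hUW i.1 h'.1
      · have h' : v i ∈ E i.1 := hv i
        rw [hEU] at h'
        exact h'.2
  refine ⟨?_, ?_, ?_⟩
  · exact (key ∅).mpr (by simp)
  · intro I J hI hJI
    exact (key J).mpr (((key I).mp hI).mono (Finset.coe_subset.mpr hJI))
  · intro I₁ I₂ h1 h2 hcard
    rw [key] at h1 h2
    have himg : (Finset.image j I₁).card < (Finset.image j I₂).card := by
      rw [Finset.card_image_of_injOn h1, Finset.card_image_of_injOn h2]
      exact hcard
    have hns : ¬ Finset.image j I₂ ⊆ Finset.image j I₁ :=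
      fun h => absurd (Finset.card_le_card h) (by omega)
    obtain ⟨y, hy2, hy1⟩ := Finset.not_subset.mp hns
    obtain ⟨e, he2, rfl⟩ := Finset.mem_image.mp hy2
    have he1 : e ∉ I₁ := fun h => hy1 (Finset.mem_image_of_mem j h)
    refine ⟨e, Finset.mem_sdiff.mpr ⟨he2, he1⟩, (key _).mpr ?_⟩
    intro a ha b hb hab
    rw [Finset.coe_insert, Set.mem_insert_iff] at ha hb
    rcases ha with rfl | ha <;> rcases hb with rfl | hb
    · rfl
    · exact absurd (hab ▸ Finset.mem_image_of_mem j (Finset.mem_coe.mp hb)) hy1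
    · exact absurd (hab ▸ Finset.mem_image_of_mem j (Finset.mem_coe.mp ha)) hy1
    · exact h1 ha hb hab
end
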